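/- Let m ≥ 1 be an integer, let 0 < x_1 < x_2 < ... < x_m be real numbers, and let β_1, ..., β_m be purely imaginary complex numbers. Then, with ω = e^{2πi/3}, Σ_{1 ≤ j ≠ k ≤ m} Re( 4 (ω − 1) x_k^{2/3} β_k x_j^{2/3} β_j / ( 3 (x_j^{2/3} − x_k^{2/3}) (x_j^{2/3} − ω x_k^{2/3}) ) ) = 0, where the sum runs over all ordered pairs (j,k) with j ≠ k. -/

import Mathlib

open Real Complex Finset

noncomputable section

/-- `ω = e^{2πi/3}`. -/
def pOmega : ℂ := Complex.exp (2 * Real.pi * Complex.I / 3)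

lemma pOmega_eq : pOmega = Complex.exp ((2 * Real.pi / 3 : ℝ) * Complex.I) := by
  unfold pOmega; congr 1; push_cast; ring

lemma pOmega_abs : ‖pOmega‖ = 1 := by
  rw [pOmega_eq]; exact Complex.norm_exp_ofReal_mul_I _

lemma pOmega_mul_conj : pOmega * (starRingEnd ℂ) pOmega = 1 := by
  rw [Complex.mul_conj, Complex.normSq_eq_norm_sq, pOmega_abs]; norm_num

lemma pOmega_im_pos : 0 < pOmega.im := by
  rw [pOmega_eq, Complex.exp_ofReal_mul_I_im]
  apply Real.sin_pos_of_pos_of_lt_pi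
  · positivity
  · nlinarith [Real.pi_pos]

lemma key (a b s t : ℝ) (ha : 0 < a) (hb : 0 < b) (hab : a ≠ b) :
    (4 * (pOmega - 1) * (b : ℂ) * ((t : ℂ) * Complex.I) * (a : ℂ) * ((s : ℂ) * Complex.I)
        / (3 * ((a : ℂ) - (b : ℂ)) * ((a : ℂ) - pOmega * (b : ℂ)))).re
    + (4 * (pOmega - 1) * (a : ℂ) * ((s : ℂ) * Complex.I) * (b : ℂ) * ((t : ℂ) * Complex.I)
        / (3 * ((b : ℂ) - (a : ℂ)) * ((b : ℂ) - pOmega * (a : ℂ)))).re = 0 := by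
  have him := pOmega_im_pos
  have hw := pOmega_mul_conj
  have hab' : (a : ℂ) ≠ (b : ℂ) := by exact_mod_cast hab
  have hd1 : 3 * ((a : ℂ) - (b : ℂ)) * ((a : ℂ) - pOmega * (b : ℂ)) ≠ 0 := by
    apply mul_ne_zero (mul_ne_zero (by norm_num) (sub_ne_zero.2 hab'))
    intro h
    have h2 := congrArg Complex.im h
    simp [Complex.ofReal_im, Complex.mul_im, Complex.ofReal_re] at h2
    rcases h2 with h2 | h2
    · exact him.ne' h2
    · exact hb.ne' h2
  have hd2 : 3 * ((b : ℂ) - (a : ℂ)) * ((b : ℂ) - pOmega * (a : ℂ)) ≠ 0 := by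
    apply mul_ne_zero (mul_ne_zero (by norm_num) (sub_ne_zero.2 hab'.symm))
    intro h
    have h2 := congrArg Complex.im h
    simp [Complex.ofReal_im, Complex.mul_im, Complex.ofReal_re] at h2
    rcases h2 with h2 | h2
    · exact him.ne' h2
    · exact ha.ne' h2
  have hcd1 : (starRingEnd ℂ) (3 * ((a : ℂ) - (b : ℂ)) * ((a : ℂ) - pOmega * (b : ℂ))) ≠ 0 :=
    fun h => hd1 (by simpa using congrArg (starRingEnd ℂ) h)
  have h : 4 * (pOmega - 1) * (a : ℂ) * ((s : ℂ) * Complex.I) * (b : ℂ) * ((t : ℂ) * Complex.I)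
        / (3 * ((b : ℂ) - (a : ℂ)) * ((b : ℂ) - pOmega * (a : ℂ)))
      = -((starRingEnd ℂ) (4 * (pOmega - 1) * (b : ℂ) * ((t : ℂ) * Complex.I) * (a : ℂ)
          * ((s : ℂ) * Complex.I)
        / (3 * ((a : ℂ) - (b : ℂ)) * ((a : ℂ) - pOmega * (b : ℂ))))) := by
    rw [map_div₀, ← neg_div, div_eq_div_iff hd2 hcd1]
    simp only [map_mul, map_sub, map_one, map_ofNat, Complex.conj_ofReal, Complex.conj_I, map_neg]
    linear_combination (12 * (a : ℂ) * b * s * t * Complex.I ^ 2 * ((a : ℂ) - b) ^ 2) * hw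
  rw [h, Complex.neg_re, Complex.conj_re]
  ring

theorem pearcey_offdiagonal_real_part_sum
    (m : ℕ) (hm : 1 ≤ m) (x : Fin m → ℝ)
    (hxpos : ∀ j, 0 < x j) (hxmono : StrictMono x)
    (β : Fin m → ℂ) (hβ : ∀ j, (β j).re = 0) :
    (∑ j, ∑ k ∈ Finset.univ.filter (fun k => k ≠ j),
      (4 * (pOmega - 1) * (x k ^ ((2 : ℝ) / 3) : ℝ) * β k * (x j ^ ((2 : ℝ) / 3) : ℝ) * β j
        / (3 * (((x j ^ ((2 : ℝ) / 3) : ℝ) : ℂ) - ((x k ^ ((2 : ℝ) / 3) : ℝ) : ℂ))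
            * (((x j ^ ((2 : ℝ) / 3) : ℝ) : ℂ)
              - pOmega * ((x k ^ ((2 : ℝ) / 3) : ℝ) : ℂ)))).re) = 0 := by
  have hβ' : ∀ j, β j = ((β j).im : ℂ) * Complex.I := by
    intro j
    rw [← Complex.re_add_im (β j), hβ j]
    simp
  set F : Fin m → Fin m → ℝ := fun j k =>
      (4 * (pOmega - 1) * (x k ^ ((2 : ℝ) / 3) : ℝ) * β k * (x j ^ ((2 : ℝ) / 3) : ℝ) * β j
        / (3 * (((x j ^ ((2 : ℝ) / 3) : ℝ) : ℂ) - ((x k ^ ((2 : ℝ) / 3) : ℝ) : ℂ))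
            * (((x j ^ ((2 : ℝ) / 3) : ℝ) : ℂ)
              - pOmega * ((x k ^ ((2 : ℝ) / 3) : ℝ) : ℂ)))).re with hF
  have hpos : ∀ j, 0 < x j ^ ((2 : ℝ) / 3) := fun j => Real.rpow_pos_of_pos (hxpos j) _
  have hne : ∀ j k : Fin m, j ≠ k → x j ^ ((2 : ℝ) / 3) ≠ x k ^ ((2 : ℝ) / 3) := by
    intro j k hjk
    rcases hjk.lt_or_gt with hlt | hlt
    · exact ne_of_lt (Real.rpow_lt_rpow (hxpos j).le (hxmono hlt) (by norm_num))
    · exact ne_of_gt (Real.rpow_lt_rpow (hxpos k).le (hxmono hlt) (by norm_num))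
  have hswap : ∀ j k : Fin m, k ≠ j → F j k + F k j = 0 := by
    intro j k hkj
    have hkey := key (x j ^ ((2 : ℝ) / 3)) (x k ^ ((2 : ℝ) / 3)) (β j).im (β k).im
      (hpos j) (hpos k) (hne j k (Ne.symm hkj))
    simp only [hF]
    rw [hβ' j, hβ' k]
    exact hkey
  have hS : (∑ j, ∑ k ∈ Finset.univ.filter (fun k => k ≠ j), F j k)
      = ∑ j, ∑ k ∈ Finset.univ.filter (fun k => k ≠ j), F k j := by
    rw [Finset.sum_comm' (s' := fun k => Finset.univ.filter (fun j => j ≠ k)) (t' := Finset.univ)]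
    intro j k
    simp [ne_comm, eq_comm]
  have h2 : (∑ j, ∑ k ∈ Finset.univ.filter (fun k => k ≠ j), F j k)
      + (∑ j, ∑ k ∈ Finset.univ.filter (fun k => k ≠ j), F j k) = 0 := by
    nth_rewrite 2 [hS]
    rw [← Finset.sum_add_distrib]
    apply Finset.sum_eq_zero
    intro j _
    rw [← Finset.sum_add_distrib]
    apply Finset.sum_eq_zero
    intro k hk
    exact hswap j k (Finset.mem_filter.1 hk).2
  linarith
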